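/- Let f : ℝ^n → ℝ be continuously differentiable, P_0 : ℝ^n → [0, ∞] proper closed and continuous on its domain, and for i = 1,…,m let A_i : ℝ^n → ℝ^{n_i} be linear with adjoint A_i^*, and P_i : ℝ^{n_i} → [0, ∞] proper closed with closed domain and continuous on its domain. Let x* satisfy x* ∈ dom P_0 and A_i x* ∈ dom P_i for all i. Suppose there are sequences ε_t > 0 with ε_t → 0, λ_{i,t} > 0 with λ_{i,t} → 0, points x^t → x* and y^t → x*, vectors ξ^t with ‖ξ^t‖ ≤ ε_t, η^t ∈ ∂P_0(y^t) (limiting subdifferential), and ζ_i^t ∈ prox_{λ_{i,t} P_i}(A_i x^t) for each i, such that ξ^t = ∇f(x^t) + η^t + Σ_{i=1}^m (1/λ_{i,t}) A_i^*(A_i x^t − ζ_i^t) for every t. Assume the constraint qualification: whenever y_0 + Σ_{i=1}^m A_i^* y_i = 0 with y_0 ∈ ∂^∞P_0(x*) and y_i ∈ ∂^∞P_i(A_i x*) for i = 1,…,m, then y_i = 0 for all i = 0,…,m. Then x* is a stationary point, i.e., 0 ∈ ∇f(x*) + ∂P_0(x*) + Σ_{i=1}^m A_i^* ∂P_i(A_i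 x*). -/

import Mathlib

open Filter Topology

/-- The proximal mapping of `λ h` at `x`. -/
def proxSet {d : ℕ} (h : EuclideanSpace ℝ (Fin d) → EReal) (lam : ℝ)
    (x : EuclideanSpace ℝ (Fin d)) : Set (EuclideanSpace ℝ (Fin d)) :=
  {z | ∀ y, (((1 / (2 * lam)) * ‖x - z‖ ^ 2 : ℝ) : EReal) + h z ≤
      (((1 / (2 * lam)) * ‖x - y‖ ^ 2 : ℝ) : EReal) + h y}

/-- The Fréchet (regular) subdifferential of `h` at `w`. -/
def frechetSubdiff {d : ℕ} (h : EuclideanSpace ℝ (Fin d) → EReal)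
    (w : EuclideanSpace ℝ (Fin d)) : Set (EuclideanSpace ℝ (Fin d)) :=
  {u | h w ≠ ⊤ ∧ 0 ≤ Filter.liminf
      (fun y => (h y - h w - ((inner ℝ u (y - w) : ℝ) : EReal)) / ((‖y - w‖ : ℝ) : EReal))
      (𝓝[≠] w)}

/-- The limiting subdifferential of `h` at `x`. -/
def limitingSubdiff {d : ℕ} (h : EuclideanSpace ℝ (Fin d) → EReal)
    (x : EuclideanSpace ℝ (Fin d)) : Set (EuclideanSpace ℝ (Fin d)) :=
  {u | h x ≠ ⊤ ∧ ∃ xs us : ℕ → EuclideanSpace ℝ (Fin d),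
      Tendsto xs atTop (𝓝 x) ∧
      Tendsto (fun t => h (xs t)) atTop (𝓝 (h x)) ∧
      Tendsto us atTop (𝓝 u) ∧
      ∀ t, us t ∈ frechetSubdiff h (xs t)}

/-- The horizon subdifferential of `h` at `x`. -/
def horizonSubdiff {d : ℕ} (h : EuclideanSpace ℝ (Fin d) → EReal)
    (x : EuclideanSpace ℝ (Fin d)) : Set (EuclideanSpace ℝ (Fin d)) :=
  {u | h x ≠ ⊤ ∧ ∃ (α : ℕ → ℝ) (xs us : ℕ → EuclideanSpace ℝ (Fin d)),
      (∀ t, 0 < α t) ∧ Tendsto α atTop (𝓝 0) ∧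
      Tendsto xs atTop (𝓝 x) ∧
      Tendsto (fun t => h (xs t)) atTop (𝓝 (h x)) ∧
      Tendsto (fun t => α t • us t) atTop (𝓝 u) ∧
      ∀ t, us t ∈ frechetSubdiff h (xs t)}

lemma prox_ne_top {d : ℕ} {h : EuclideanSpace ℝ (Fin d) → EReal}
    (hnn : ∀ x, 0 ≤ h x) {y0 : EuclideanSpace ℝ (Fin d)} (hy0 : h y0 ≠ ⊤)
    {lam : ℝ} {xb z : EuclideanSpace ℝ (Fin d)} (hz : z ∈ proxSet h lam xb) :
    h z ≠ ⊤ := by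
  intro htop
  have := hz y0
  rw [htop] at this
  have hbot : h y0 ≠ ⊥ := ne_of_gt (lt_of_lt_of_le (by norm_num) (hnn y0))
  lift h y0 to ℝ using ⟨hy0, hbot⟩ with r
  rw [EReal.coe_add_top] at this
  rw [← EReal.coe_add, top_le_iff] at this
  exact (EReal.coe_ne_top _) this

lemma ereal_nonneg_liminf {α : Type*} {l : Filter α} {q : α → EReal}
    (H : ∀ ε : ℝ, 0 < ε → ∀ᶠ y in l, ((-ε : ℝ) : EReal) ≤ q y) :
    0 ≤ Filter.liminf q l := by
  by_contra hc
  push_neg at hc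
  set L := Filter.liminf q l with hL
  have h1 : ∀ ε : ℝ, 0 < ε → ((-ε : ℝ) : EReal) ≤ L := fun ε hε =>
    le_liminf_of_le (by isBoundedDefault) (H ε hε)
  have hbot : L ≠ ⊥ := by
    intro hb
    have := h1 1 one_pos
    rw [hb, le_bot_iff] at this
    exact (EReal.coe_ne_bot _) this
  have htop : L ≠ ⊤ := hc.ne_top
  lift L to ℝ using ⟨htop, hbot⟩ with r
  have hr : r < 0 := by exact_mod_cast hc
  have := h1 (-r/2) (by linarith)
  rw [EReal.coe_le_coe_iff] at this
  linarith

lemma prox_frechet {d : ℕ} {h : EuclideanSpace ℝ (Fin d) → EReal}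
    (hnn : ∀ x, 0 ≤ h x) {lam : ℝ} (hlam : 0 < lam)
    {xb z : EuclideanSpace ℝ (Fin d)} (hz : z ∈ proxSet h lam xb) (hzt : h z ≠ ⊤) :
    ((1/lam) • (xb - z)) ∈ frechetSubdiff h z := by
  have hzb : h z ≠ ⊥ := ne_of_gt (lt_of_lt_of_le (by norm_num) (hnn z))
  obtain ⟨r, hr⟩ : ∃ r : ℝ, h z = (r : EReal) :=
    ⟨(h z).toReal, (EReal.coe_toReal hzt hzb).symm⟩
  refine ⟨hzt, ?_⟩
  set u := (1/lam) • (xb - z) with hu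
  have key : ∀ y, ((-(1/(2*lam)) * ‖y - z‖^2 : ℝ) : EReal) ≤
      h y - h z - ((inner ℝ u (y - z) : ℝ) : EReal) := by
    intro y
    by_cases hyt : h y = ⊤
    · rw [hyt, hr, EReal.top_sub_coe, EReal.top_sub_coe]
      exact le_top
    · have hyb : h y ≠ ⊥ := ne_of_gt (lt_of_lt_of_le (by norm_num) (hnn y))
      obtain ⟨s, hs⟩ : ∃ s : ℝ, h y = (s : EReal) :=
        ⟨(h y).toReal, (EReal.coe_toReal hyt hyb).symm⟩
      rw [hs, hr, ← EReal.coe_sub, ← EReal.coe_sub, EReal.coe_le_coe_iff]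
      have hinner : (inner ℝ u (y - z) : ℝ) = (1/lam) * inner ℝ (xb - z) (y - z) := by
        rw [hu, real_inner_smul_left]
      have hreal : (1 / (2 * lam)) * ‖xb - z‖ ^ 2 + r ≤ (1 / (2 * lam)) * ‖xb - y‖ ^ 2 + s := by
        have := hz y
        rw [hr, hs, ← EReal.coe_add, ← EReal.coe_add, EReal.coe_le_coe_iff] at this
        exact this
      have idn : ‖xb - y‖^2 = ‖xb - z‖^2 - 2*(inner ℝ (xb-z) (y-z) : ℝ) + ‖y-z‖^2 := by
        rw [← sub_sub_sub_cancel_right xb y z]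
        exact norm_sub_sq_real _ _
      rw [hinner]
      have h2 : (1/lam : ℝ) = 2*(1/(2*lam)) := by field_simp
      rw [h2]
      have hreal2 : (1/(2*lam)) * ‖xb - z‖^2 + r ≤
          (1/(2*lam)) * (‖xb - z‖^2 - 2*(inner ℝ (xb-z) (y-z):ℝ) + ‖y-z‖^2) + s := by
        rw [← idn]; exact hreal
      have e1 : (1/(2*lam)) * (‖xb - z‖^2 - 2*(inner ℝ (xb-z) (y-z):ℝ) + ‖y-z‖^2) =
          (1/(2*lam))*‖xb - z‖^2 - 2*((1/(2*lam))*(inner ℝ (xb-z) (y-z):ℝ))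
            + (1/(2*lam))*‖y-z‖^2 := by ring
      linarith [hreal2, e1]
  apply ereal_nonneg_liminf
  intro ε hε
  have hball : ∀ᶠ y in 𝓝 z, dist y z < 2*lam*ε := by
    rw [Metric.eventually_nhds_iff]
    exact ⟨2*lam*ε, by positivity, fun y hy => hy⟩
  filter_upwards [eventually_nhdsWithin_of_eventually_nhds hball,
    self_mem_nhdsWithin] with y hy hymem
  have hyz : y ≠ z := hymem
  have hnorm : ‖y - z‖ < 2*lam*ε := by rwa [← dist_eq_norm]
  have hpos : 0 < ‖y - z‖ := by
    rw [norm_pos_iff]; exact sub_ne_zero_of_ne hyz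
  calc ((-ε : ℝ) : EReal) ≤ ((-(1/(2*lam)) * ‖y - z‖ : ℝ) : EReal) := by
        rw [EReal.coe_le_coe_iff]
        rw [neg_mul, neg_le_neg_iff]
        rw [div_mul_eq_mul_div, one_mul, div_le_iff₀ (by positivity)]
        linarith
    _ = ((-(1/(2*lam)) * ‖y - z‖^2 : ℝ) : EReal) / ((‖y - z‖ : ℝ) : EReal) := by
        rw [← EReal.coe_div]
        congr 1
        field_simp
    _ ≤ (h y - h z - ((inner ℝ u (y - z) : ℝ) : EReal)) / ((‖y - z‖ : ℝ) : EReal) :=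
        EReal.div_le_div_right_of_nonneg (by exact_mod_cast norm_nonneg _) (key y)

lemma limiting_diag {d : ℕ} {h : EuclideanSpace ℝ (Fin d) → EReal}
    (hnn : ∀ x, 0 ≤ h x) (yseq ηseq : ℕ → EuclideanSpace ℝ (Fin d))
    (hmem : ∀ t, ηseq t ∈ limitingSubdiff h (yseq t)) :
    ∃ ys es : ℕ → EuclideanSpace ℝ (Fin d),
      (∀ t, es t ∈ frechetSubdiff h (ys t)) ∧
      (∀ t, h (ys t) ≠ ⊤) ∧
      (∀ t, ‖ys t - yseq t‖ < 1/(t+1)) ∧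
      (∀ t, ‖es t - ηseq t‖ < 1/(t+1)) ∧
      (∀ t, |(h (ys t)).toReal - (h (yseq t)).toReal| < 1/(t+1)) := by
  have H : ∀ t : ℕ, ∃ p : EuclideanSpace ℝ (Fin d) × EuclideanSpace ℝ (Fin d),
      p.2 ∈ frechetSubdiff h p.1 ∧ h p.1 ≠ ⊤ ∧ ‖p.1 - yseq t‖ < 1/(t+1) ∧
      ‖p.2 - ηseq t‖ < 1/(t+1) ∧ |(h p.1).toReal - (h (yseq t)).toReal| < 1/(t+1) := by
    intro t
    obtain ⟨hne, xs, us, hxs, hh, hus, hfr⟩ := hmem t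
    have hbot : h (yseq t) ≠ ⊥ := ne_of_gt (lt_of_lt_of_le (by norm_num) (hnn _))
    have hδ : (0:ℝ) < 1/(t+1) := by positivity
    have e1 : ∀ᶠ s in atTop, ‖xs s - yseq t‖ < 1/(t+1) := by
      have := (hxs.sub_const (yseq t)).norm
      simp only [sub_self, norm_zero] at this
      exact this.eventually_lt_const hδ
    have e2 : ∀ᶠ s in atTop, ‖us s - ηseq t‖ < 1/(t+1) := by
      have := (hus.sub_const (ηseq t)).norm
      simp only [sub_self, norm_zero] at this
      exact this.eventually_lt_const hδ
    have e3 : ∀ᶠ s in atTop, h (xs s) ≠ ⊤ := hh.eventually_ne hne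
    have e4 : ∀ᶠ s in atTop, |(h (xs s)).toReal - (h (yseq t)).toReal| < 1/(t+1) := by
      have htr : Tendsto (fun s => (h (xs s)).toReal) atTop (𝓝 ((h (yseq t)).toReal)) :=
        (EReal.tendsto_toReal hne hbot).comp hh
      have := (htr.sub_const ((h (yseq t)).toReal)).abs
      simp only [sub_self, abs_zero] at this
      exact this.eventually_lt_const hδ
    obtain ⟨s, hs1, hs2, hs3, hs4⟩ := (e1.and (e2.and (e3.and e4))).exists
    exact ⟨(xs s, us s), hfr s, hs3, hs1, hs2, hs4⟩
  choose p h1 h2 h3 h4 h5 using H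
  exact ⟨fun t => (p t).1, fun t => (p t).2, h1, h2, h3, h4, h5⟩

lemma exists_subseq_gt (c : ℕ → ℝ) (hc : ¬ BddAbove (Set.range c)) :
    ∃ φ : ℕ → ℕ, StrictMono φ ∧ ∀ t : ℕ, (t : ℝ) < c (φ t) := by
  apply Filter.extraction_forall_of_frequently (P := fun n k => (n:ℝ) < c k)
  intro n
  by_contra hfreq
  rw [not_frequently] at hfreq
  simp only [not_lt] at hfreq
  obtain ⟨N, hN⟩ := eventually_atTop.1 hfreq
  apply hc
  refine ⟨(n : ℝ) ⊔ (Finset.range (N+1)).sup' (by simp) c, ?_⟩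
  rintro r ⟨k, rfl⟩
  rcases le_or_gt N k with hk | hk
  · exact le_sup_of_le_left (hN k hk)
  · exact le_sup_of_le_right (Finset.le_sup' c (by simp [Finset.mem_range]; omega))


set_option maxHeartbeats 2000000

/-- Convergence of SDCAM to a stationary point: under approximate stationarity
of the iterates and the constraint qualification, the limit `x*` satisfies
`0 ∈ ∇f(x*) + ∂P_0(x*) + Σ_i A_i^* ∂P_i(A_i x*)`. -/
theorem sdcam_accumulation_stationary {n m : ℕ} {ni : Fin m → ℕ}
    (f : EuclideanSpace ℝ (Fin n) → ℝ) (hf : ContDiff ℝ 1 f)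
    (P0 : EuclideanSpace ℝ (Fin n) → EReal)
    (hP0nn : ∀ x, 0 ≤ P0 x) (hP0proper : ∃ x, P0 x ≠ ⊤)
    (hP0closed : LowerSemicontinuous P0)
    (hP0cont : ContinuousOn P0 {x | P0 x ≠ ⊤})
    (A : (i : Fin m) → EuclideanSpace ℝ (Fin n) →L[ℝ] EuclideanSpace ℝ (Fin (ni i)))
    (P : (i : Fin m) → EuclideanSpace ℝ (Fin (ni i)) → EReal)
    (hPnn : ∀ i y, 0 ≤ P i y) (hPproper : ∀ i, ∃ y, P i y ≠ ⊤)
    (hPclosed : ∀ i, LowerSemicontinuous (P i))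
    (hPdom : ∀ i, IsClosed {y | P i y ≠ ⊤})
    (hPcont : ∀ i, ContinuousOn (P i) {y | P i y ≠ ⊤})
    (xstar : EuclideanSpace ℝ (Fin n))
    (hxstar0 : P0 xstar ≠ ⊤) (hxstari : ∀ i, P i (A i xstar) ≠ ⊤)
    (ε : ℕ → ℝ) (hεpos : ∀ t, 0 < ε t) (hε : Tendsto ε atTop (𝓝 0))
    (lam : Fin m → ℕ → ℝ) (hlampos : ∀ i t, 0 < lam i t)
    (hlam : ∀ i, Tendsto (lam i) atTop (𝓝 0))
    (x y : ℕ → EuclideanSpace ℝ (Fin n))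
    (hx : Tendsto x atTop (𝓝 xstar)) (hy : Tendsto y atTop (𝓝 xstar))
    (ξ : ℕ → EuclideanSpace ℝ (Fin n)) (hξ : ∀ t, ‖ξ t‖ ≤ ε t)
    (η : ℕ → EuclideanSpace ℝ (Fin n)) (hη : ∀ t, η t ∈ limitingSubdiff P0 (y t))
    (ζ : (i : Fin m) → ℕ → EuclideanSpace ℝ (Fin (ni i)))
    (hζ : ∀ i t, ζ i t ∈ proxSet (P i) (lam i t) (A i (x t)))
    (heq : ∀ t, ξ t = gradient f (x t) + η t +
      ∑ i, (1 / lam i t) •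
        (ContinuousLinearMap.adjoint (A i)) (A i (x t) - ζ i t))
    (hCQ : ∀ (y0 : EuclideanSpace ℝ (Fin n))
        (yi : (i : Fin m) → EuclideanSpace ℝ (Fin (ni i))),
      y0 ∈ horizonSubdiff P0 xstar →
      (∀ i, yi i ∈ horizonSubdiff (P i) (A i xstar)) →
      y0 + ∑ i, (ContinuousLinearMap.adjoint (A i)) (yi i) = 0 →
      y0 = 0 ∧ ∀ i, yi i = 0) :
    ∃ η₀ ∈ limitingSubdiff P0 xstar,
      ∃ χ : (i : Fin m) → EuclideanSpace ℝ (Fin (ni i)),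
        (∀ i, χ i ∈ limitingSubdiff (P i) (A i xstar)) ∧
        gradient f xstar + η₀ +
          ∑ i, (ContinuousLinearMap.adjoint (A i)) (χ i) = 0 := by
  classical
  -- basic facts
  have hP0bot : ∀ z, P0 z ≠ ⊥ := fun z => ne_of_gt (lt_of_lt_of_le (by norm_num) (hP0nn z))
  have hPbot : ∀ i z, P i z ≠ ⊥ := fun i z => ne_of_gt (lt_of_lt_of_le (by norm_num) (hPnn i z))
  set u : (i : Fin m) → ℕ → EuclideanSpace ℝ (Fin (ni i)) :=
    fun i t => (1 / lam i t) • (A i (x t) - ζ i t) with hudef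
  -- rewritten equation
  have heq' : ∀ t, η t + ∑ i, (ContinuousLinearMap.adjoint (A i)) (u i t)
      = ξ t - gradient f (x t) := by
    intro t
    have hsum : ∑ i, (ContinuousLinearMap.adjoint (A i)) (u i t)
        = ∑ i, (1 / lam i t) • (ContinuousLinearMap.adjoint (A i)) (A i (x t) - ζ i t) :=
      Finset.sum_congr rfl (fun i _ => map_smul _ _ _)
    rw [hsum, heq t]
    abel
  -- ζ properties
  have hζtop : ∀ i t, P i (ζ i t) ≠ ⊤ :=
    fun i t => prox_ne_top (hPnn i) (hxstari i) (hζ i t)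
  have hufre : ∀ i t, u i t ∈ frechetSubdiff (P i) (ζ i t) :=
    fun i t => prox_frechet (hPnn i) (hlampos i t) (hζ i t) (hζtop i t)
  -- distance estimate for ζ
  have hζdist : ∀ i t, ‖A i (x t) - ζ i t‖^2 ≤
      ‖A i (x t) - A i xstar‖^2 + 2 * lam i t * (P i (A i xstar)).toReal := by
    intro i t
    have hins := hζ i t (A i xstar)
    have hr : P i (ζ i t) = ((P i (ζ i t)).toReal : EReal) :=
      (EReal.coe_toReal (hζtop i t) (hPbot i _)).symm
    have hrs : P i (A i xstar) = ((P i (A i xstar)).toReal : EReal) :=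
      (EReal.coe_toReal (hxstari i) (hPbot i _)).symm
    rw [hr, hrs, ← EReal.coe_add, ← EReal.coe_add, EReal.coe_le_coe_iff] at hins
    have hrnn : 0 ≤ (P i (ζ i t)).toReal := by
      have := hPnn i (ζ i t)
      rw [hr] at this
      exact_mod_cast this
    have hl := hlampos i t
    have k1 : (1/(2*lam i t)) * ‖A i (x t) - ζ i t‖^2 ≤
        (1/(2*lam i t)) * ‖A i (x t) - A i xstar‖^2 + (P i (A i xstar)).toReal := by
      linarith
    have h2l : (0:ℝ) < 2 * lam i t := by linarith
    have := mul_le_mul_of_nonneg_left k1 h2l.le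
    calc ‖A i (x t) - ζ i t‖^2
        = (2*lam i t) * ((1/(2*lam i t)) * ‖A i (x t) - ζ i t‖^2) := by
          field_simp
      _ ≤ (2*lam i t) * ((1/(2*lam i t)) * ‖A i (x t) - A i xstar‖^2
            + (P i (A i xstar)).toReal) := this
      _ = ‖A i (x t) - A i xstar‖^2 + 2 * lam i t * (P i (A i xstar)).toReal := by
          field_simp
  have hAx : ∀ i, Tendsto (fun t => A i (x t)) atTop (𝓝 (A i xstar)) :=
    fun i => ((A i).continuous.tendsto _).comp hx
  have hζtend : ∀ i, Tendsto (fun t => ζ i t) atTop (𝓝 (A i xstar)) := by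
    intro i
    have hb : Tendsto (fun t => ‖A i (x t) - A i xstar‖^2
        + 2 * lam i t * (P i (A i xstar)).toReal) atTop (𝓝 0) := by
      have h1 : Tendsto (fun t => ‖A i (x t) - A i xstar‖) atTop (𝓝 0) := by
        have := ((hAx i).sub_const (A i xstar)).norm
        simpa using this
      have h2 : Tendsto (fun t => ‖A i (x t) - A i xstar‖^2) atTop (𝓝 0) := by
        have := h1.mul h1
        simpa [pow_two] using this
      have h3 : Tendsto (fun t => 2 * lam i t * (P i (A i xstar)).toReal) atTop (𝓝 0) := by
        have := ((hlam i).const_mul 2).mul_const ((P i (A i xstar)).toReal)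
        simpa using this
      simpa using h2.add h3
    have hsq : Tendsto (fun t => ‖A i (x t) - ζ i t‖^2) atTop (𝓝 0) :=
      squeeze_zero' (Eventually.of_forall fun t => sq_nonneg _)
        (Eventually.of_forall (hζdist i)) hb
    have hnrm : Tendsto (fun t => ‖A i (x t) - ζ i t‖) atTop (𝓝 0) := by
      have h1 : (fun t => ‖A i (x t) - ζ i t‖)
          = fun t => Real.sqrt (‖A i (x t) - ζ i t‖^2) :=
        funext fun t => (Real.sqrt_sq (norm_nonneg _)).symm
      rw [h1]
      have h2 : Tendsto (fun t => Real.sqrt (‖A i (x t) - ζ i t‖^2)) atTop (𝓝 (Real.sqrt 0)) :=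
        (Real.continuous_sqrt.tendsto 0).comp hsq
      rw [Real.sqrt_zero] at h2
      exact h2
    have hvec : Tendsto (fun t => A i (x t) - ζ i t) atTop (𝓝 0) :=
      tendsto_zero_iff_norm_tendsto_zero.2 hnrm
    have := (hAx i).sub hvec
    simpa using this
  have hPζ : ∀ i, Tendsto (fun t => P i (ζ i t)) atTop (𝓝 (P i (A i xstar))) := by
    intro i
    have hcw : ContinuousWithinAt (P i) {z | P i z ≠ ⊤} (A i xstar) :=
      hPcont i _ (hxstari i)
    apply hcw.tendsto.comp
    rw [tendsto_nhdsWithin_iff]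
    exact ⟨hζtend i, Eventually.of_forall fun t => hζtop i t⟩
  have hP0y : Tendsto (fun t => P0 (y t)) atTop (𝓝 (P0 xstar)) := by
    have hcw : ContinuousWithinAt P0 {z | P0 z ≠ ⊤} xstar := hP0cont _ hxstar0
    apply hcw.tendsto.comp
    rw [tendsto_nhdsWithin_iff]
    exact ⟨hy, Eventually.of_forall fun t => (hη t).1⟩
  -- diagonal sequence for P0
  obtain ⟨ys, es, hfre, hystop, hysclose, hesclose, hysval⟩ :=
    limiting_diag hP0nn y η hη
  have hone : Tendsto (fun t : ℕ => 1/((t:ℝ)+1)) atTop (𝓝 0) :=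
    tendsto_one_div_add_atTop_nhds_zero_nat
  have hysdiff : Tendsto (fun t => ys t - y t) atTop (𝓝 0) :=
    squeeze_zero_norm (fun t => (hysclose t).le) hone
  have hys : Tendsto ys atTop (𝓝 xstar) := by
    have := hysdiff.add hy
    simpa using this
  have hesdiff : Tendsto (fun t => es t - η t) atTop (𝓝 0) :=
    squeeze_zero_norm (fun t => (hesclose t).le) hone
  have hP0ys : Tendsto (fun t => P0 (ys t)) atTop (𝓝 (P0 xstar)) := by
    have htr : Tendsto (fun t => (P0 (y t)).toReal) atTop (𝓝 ((P0 xstar).toReal)) :=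
      (EReal.tendsto_toReal hxstar0 (hP0bot xstar)).comp hP0y
    have hdiff : Tendsto (fun t => (P0 (ys t)).toReal - (P0 (y t)).toReal) atTop (𝓝 0) :=
      squeeze_zero_norm (fun t => by
        rw [Real.norm_eq_abs]; exact (hysval t).le) hone
    have h2 : Tendsto (fun t => (P0 (ys t)).toReal) atTop (𝓝 ((P0 xstar).toReal)) := by
      have := hdiff.add htr
      simpa using this
    have h3 : Tendsto (fun t => (((P0 (ys t)).toReal : ℝ) : EReal)) atTop
        (𝓝 (((P0 xstar).toReal : ℝ) : EReal)) :=
      (continuous_coe_real_ereal.tendsto _).comp h2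
    have h4 : (fun t => (((P0 (ys t)).toReal : ℝ) : EReal)) = fun t => P0 (ys t) :=
      funext fun t => EReal.coe_toReal (hystop t) (hP0bot _)
    rw [h4, EReal.coe_toReal hxstar0 (hP0bot xstar)] at h3
    exact h3
  -- gradient and ξ limits
  have hgradc : Continuous (gradient f) := by
    show Continuous fun z => (InnerProductSpace.toDual ℝ _).symm (fderiv ℝ f z)
    exact (InnerProductSpace.toDual ℝ _).symm.continuous.comp (hf.continuous_fderiv one_ne_zero)
  have hgrad : Tendsto (fun t => gradient f (x t)) atTop (𝓝 (gradient f xstar)) :=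
    (hgradc.tendsto _).comp hx
  have hξ0 : Tendsto ξ atTop (𝓝 0) := squeeze_zero_norm hξ hε
  -- the norm sum
  set c : ℕ → ℝ := fun t => ‖η t‖ + ∑ i, ‖u i t‖ with hcdef
  have hηle : ∀ t, ‖η t‖ ≤ c t := fun t =>
    le_add_of_nonneg_right (Finset.sum_nonneg fun i _ => norm_nonneg _)
  have hule : ∀ i t, ‖u i t‖ ≤ c t := fun i t =>
    le_add_of_nonneg_left (norm_nonneg _) |>.trans'
      (Finset.single_le_sum (fun j _ => norm_nonneg (u j t)) (Finset.mem_univ i))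
  -- boundedness via CQ
  have hbdd : BddAbove (Set.range c) := by
    by_contra hcb
    obtain ⟨φ, hφ, hφgt⟩ := exists_subseq_gt c hcb
    have hcpos : ∀ t, 0 < c (φ t) := fun t =>
      lt_of_le_of_lt (Nat.cast_nonneg t) (hφgt t)
    set W : ℕ → EuclideanSpace ℝ (Fin n) × ((i : Fin m) → EuclideanSpace ℝ (Fin (ni i))) :=
      fun t => ((c (φ t))⁻¹ • η (φ t), fun i => (c (φ t))⁻¹ • u i (φ t)) with hWdef
    have hWball : ∀ t, W t ∈ Metric.closedBall 0 1 := by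
      intro t
      rw [mem_closedBall_zero_iff, Prod.norm_def]
      have hpos := hcpos t
      have hb : ∀ v : ℝ, v ≤ c (φ t) → (c (φ t))⁻¹ * v ≤ 1 := by
        intro v hv
        rw [← inv_mul_cancel₀ hpos.ne']
        exact mul_le_mul_of_nonneg_left hv (inv_nonneg.2 hpos.le)
      apply max_le
      · rw [norm_smul, Real.norm_eq_abs, abs_of_pos (inv_pos.2 hpos)]
        exact hb _ (hηle (φ t))
      · rw [pi_norm_le_iff_of_nonneg zero_le_one]
        intro i
        rw [norm_smul, Real.norm_eq_abs, abs_of_pos (inv_pos.2 hpos)]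
        exact hb _ (hule i (φ t))
    obtain ⟨a, -, ψ, hψ, hWt⟩ := (isCompact_closedBall (0:EuclideanSpace ℝ (Fin n) ×
      ((i : Fin m) → EuclideanSpace ℝ (Fin (ni i)))) 1).tendsto_subseq hWball
    set σ : ℕ → ℕ := φ ∘ ψ with hσdef
    have hσ : StrictMono σ := hφ.comp hψ
    have hw0 : Tendsto (fun t => (c (σ t))⁻¹ • η (σ t)) atTop (𝓝 a.1) :=
      (continuous_fst.tendsto a).comp hWt
    have hwi : ∀ i, Tendsto (fun t => (c (σ t))⁻¹ • u i (σ t)) atTop (𝓝 (a.2 i)) :=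
      fun i => ((continuous_apply i).tendsto _).comp ((continuous_snd.tendsto a).comp hWt)
    have hinv0 : Tendsto (fun t => (c (σ t))⁻¹) atTop (𝓝 0) := by
      apply squeeze_zero' (Eventually.of_forall fun t => (inv_pos.2 (hcpos (ψ t))).le)
        (g := fun t : ℕ => ((t:ℝ))⁻¹)
      · filter_upwards [eventually_ge_atTop 1] with t ht
        have h0 : (0:ℝ) < (t:ℝ) := by exact_mod_cast ht
        have h1 : (t:ℝ) ≤ ((ψ t : ℕ):ℝ) := by exact_mod_cast hψ.le_apply
        have h2 : ((ψ t : ℕ):ℝ) < c (σ t) := hφgt (ψ t)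
        exact inv_anti₀ h0 (h1.trans h2.le)
      · exact tendsto_inv_atTop_nhds_zero_nat
    have hcinvpos : ∀ t, 0 < (c (σ t))⁻¹ := fun t => inv_pos.2 (hcpos (ψ t))
    -- the scaled equation and its limit
    have hsumeq : ∀ t, (c (σ t))⁻¹ • η (σ t)
        + ∑ i, (ContinuousLinearMap.adjoint (A i)) ((c (σ t))⁻¹ • u i (σ t))
        = (c (σ t))⁻¹ • (ξ (σ t) - gradient f (x (σ t))) := by
      intro t
      have := heq' (σ t)
      calc (c (σ t))⁻¹ • η (σ t)
          + ∑ i, (ContinuousLinearMap.adjoint (A i)) ((c (σ t))⁻¹ • u i (σ t))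
          = (c (σ t))⁻¹ • η (σ t)
            + ∑ i, (c (σ t))⁻¹ • (ContinuousLinearMap.adjoint (A i)) (u i (σ t)) := by
            congr 1
            exact Finset.sum_congr rfl (fun i _ => map_smul _ _ _)
        _ = (c (σ t))⁻¹ • (η (σ t)
            + ∑ i, (ContinuousLinearMap.adjoint (A i)) (u i (σ t))) := by
            rw [smul_add, Finset.smul_sum]
        _ = (c (σ t))⁻¹ • (ξ (σ t) - gradient f (x (σ t))) := by rw [this]
    have hrhs0 : Tendsto (fun t => (c (σ t))⁻¹ • (ξ (σ t) - gradient f (x (σ t))))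
        atTop (𝓝 0) := by
      have hsub : Tendsto (fun t => ξ (σ t) - gradient f (x (σ t))) atTop
          (𝓝 (0 - gradient f xstar)) :=
        ((hξ0.comp (hσ.tendsto_atTop)).sub (hgrad.comp (hσ.tendsto_atTop)))
      have := hinv0.smul hsub
      simpa using this
    have hlhs : Tendsto (fun t => (c (σ t))⁻¹ • η (σ t)
        + ∑ i, (ContinuousLinearMap.adjoint (A i)) ((c (σ t))⁻¹ • u i (σ t)))
        atTop (𝓝 (a.1 + ∑ i, (ContinuousLinearMap.adjoint (A i)) (a.2 i))) := by
      apply hw0.add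
      exact tendsto_finset_sum _ (fun i _ =>
        ((ContinuousLinearMap.adjoint (A i)).continuous.tendsto _).comp (hwi i))
    have hsum0 : a.1 + ∑ i, (ContinuousLinearMap.adjoint (A i)) (a.2 i) = 0 := by
      apply tendsto_nhds_unique hlhs
      have : (fun t => (c (σ t))⁻¹ • η (σ t)
          + ∑ i, (ContinuousLinearMap.adjoint (A i)) ((c (σ t))⁻¹ • u i (σ t)))
          = fun t => (c (σ t))⁻¹ • (ξ (σ t) - gradient f (x (σ t))) :=
        funext hsumeq
      rw [this]
      exact hrhs0
    -- norms sum to one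
    have hnorm1 : ∀ t, ‖(c (σ t))⁻¹ • η (σ t)‖
        + ∑ i, ‖(c (σ t))⁻¹ • u i (σ t)‖ = 1 := by
      intro t
      have hpos : (0:ℝ) < c (σ t) := hcpos (ψ t)
      have habs : |(c (σ t))⁻¹| = (c (σ t))⁻¹ := abs_of_pos (hcinvpos t)
      simp only [norm_smul, Real.norm_eq_abs, habs]
      rw [← Finset.mul_sum, ← mul_add, inv_mul_cancel₀ hpos.ne']
    have hnorml : Tendsto (fun t => ‖(c (σ t))⁻¹ • η (σ t)‖
        + ∑ i, ‖(c (σ t))⁻¹ • u i (σ t)‖) atTop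
        (𝓝 (‖a.1‖ + ∑ i, ‖a.2 i‖)) :=
      hw0.norm.add (tendsto_finset_sum _ (fun i _ => (hwi i).norm))
    have hsum1 : ‖a.1‖ + ∑ i, ‖a.2 i‖ = 1 := by
      apply tendsto_nhds_unique hnorml
      have : (fun t => ‖(c (σ t))⁻¹ • η (σ t)‖ + ∑ i, ‖(c (σ t))⁻¹ • u i (σ t)‖)
          = fun _ => (1:ℝ) := funext hnorm1
      rw [this]
      exact tendsto_const_nhds
    -- horizon membership of a.1
    have hhor0 : a.1 ∈ horizonSubdiff P0 xstar := by
      refine ⟨hxstar0, fun t => (c (σ t))⁻¹, fun t => ys (σ t), fun t => es (σ t),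
        hcinvpos, hinv0, hys.comp hσ.tendsto_atTop, hP0ys.comp hσ.tendsto_atTop, ?_,
        fun t => hfre (σ t)⟩
      have hsplit : ∀ t, (c (σ t))⁻¹ • es (σ t)
          = (c (σ t))⁻¹ • η (σ t) + (c (σ t))⁻¹ • (es (σ t) - η (σ t)) := by
        intro t
        rw [← smul_add, add_sub_cancel]
      have h2 : Tendsto (fun t => (c (σ t))⁻¹ • (es (σ t) - η (σ t))) atTop (𝓝 0) := by
        apply squeeze_zero_norm' (a := fun t : ℕ => 1/((σ t : ℝ)+1))
        · filter_upwards [eventually_ge_atTop 1] with t ht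
          rw [norm_smul, Real.norm_eq_abs, abs_of_pos (hcinvpos t)]
          have hc1 : (1:ℝ) ≤ c (σ t) := by
            have h1 : ((t:ℕ):ℝ) ≤ ((ψ t : ℕ):ℝ) := by exact_mod_cast hψ.le_apply
            have h2' : ((ψ t : ℕ):ℝ) < c (σ t) := hφgt (ψ t)
            have ht' : (1:ℝ) ≤ (t:ℝ) := by exact_mod_cast ht
            linarith
          have hinvle : (c (σ t))⁻¹ ≤ 1 := by
            rw [inv_le_one_iff₀]; right; exact hc1
          calc (c (σ t))⁻¹ * ‖es (σ t) - η (σ t)‖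
              ≤ 1 * ‖es (σ t) - η (σ t)‖ :=
                mul_le_mul_of_nonneg_right hinvle (norm_nonneg _)
            _ = ‖es (σ t) - η (σ t)‖ := one_mul _
            _ ≤ 1/((σ t : ℝ)+1) := (hesclose (σ t)).le
        · apply squeeze_zero' (g := fun t : ℕ => 1/((t:ℝ)+1))
            (Eventually.of_forall fun t => by positivity)
            (Eventually.of_forall fun t => by
              have hle : ((t:ℕ):ℝ) ≤ ((σ t : ℕ):ℝ) := by exact_mod_cast hσ.le_apply
              apply one_div_le_one_div_of_le (by positivity)
              linarith)
            hone
      have : Tendsto (fun t => (c (σ t))⁻¹ • η (σ t)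
          + (c (σ t))⁻¹ • (es (σ t) - η (σ t))) atTop (𝓝 (a.1 + 0)) := hw0.add h2
      rw [add_zero] at this
      exact this.congr (fun t => (hsplit t).symm)
    -- horizon membership of a.2 i
    have hhori : ∀ i, a.2 i ∈ horizonSubdiff (P i) (A i xstar) := by
      intro i
      exact ⟨hxstari i, fun t => (c (σ t))⁻¹, fun t => ζ i (σ t), fun t => u i (σ t),
        hcinvpos, hinv0, (hζtend i).comp hσ.tendsto_atTop, (hPζ i).comp hσ.tendsto_atTop,
        hwi i, fun t => hufre i (σ t)⟩
    obtain ⟨hz1, hz2⟩ := hCQ a.1 a.2 hhor0 hhori hsum0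
    have h01 : ‖a.1‖ + ∑ i, ‖a.2 i‖ = 0 := by
      rw [hz1, norm_zero, Finset.sum_eq_zero (fun i _ => by rw [hz2 i, norm_zero])]
      norm_num
    exact zero_ne_one (h01.symm.trans hsum1)
  -- bounded case: extract convergent subsequence
  obtain ⟨R, hR⟩ := hbdd
  have hcR : ∀ t, c t ≤ R := fun t => hR ⟨t, rfl⟩
  set V : ℕ → EuclideanSpace ℝ (Fin n) × ((i : Fin m) → EuclideanSpace ℝ (Fin (ni i))) :=
    fun t => (η t, fun i => u i t) with hVdef
  have hVball : ∀ t, V t ∈ Metric.closedBall 0 (max R 0) := by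
    intro t
    rw [mem_closedBall_zero_iff, Prod.norm_def]
    apply max_le
    · exact le_max_of_le_left ((hηle t).trans (hcR t))
    · rw [pi_norm_le_iff_of_nonneg (le_max_right R 0)]
      exact fun i => le_max_of_le_left ((hule i t).trans (hcR t))
  obtain ⟨a, -, ψ, hψ, hVt⟩ := (isCompact_closedBall (0:EuclideanSpace ℝ (Fin n) ×
    ((i : Fin m) → EuclideanSpace ℝ (Fin (ni i)))) (max R 0)).tendsto_subseq hVball
  have hη0 : Tendsto (fun t => η (ψ t)) atTop (𝓝 a.1) :=
    (continuous_fst.tendsto a).comp hVt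
  have hχ : ∀ i, Tendsto (fun t => u i (ψ t)) atTop (𝓝 (a.2 i)) :=
    fun i => ((continuous_apply i).tendsto _).comp ((continuous_snd.tendsto a).comp hVt)
  refine ⟨a.1, ⟨hxstar0, fun t => ys (ψ t), fun t => es (ψ t),
    hys.comp hψ.tendsto_atTop, hP0ys.comp hψ.tendsto_atTop, ?_,
    fun t => hfre (ψ t)⟩, a.2, fun i =>
    ⟨hxstari i, fun t => ζ i (ψ t), fun t => u i (ψ t),
      (hζtend i).comp hψ.tendsto_atTop, (hPζ i).comp hψ.tendsto_atTop,
      hχ i, fun t => hufre i (ψ t)⟩, ?_⟩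
  · have h2 : Tendsto (fun t => es (ψ t) - η (ψ t)) atTop (𝓝 0) :=
      hesdiff.comp hψ.tendsto_atTop
    have := h2.add hη0
    rw [zero_add] at this
    exact this.congr (fun t => by abel)
  · -- limit of the equation
    have hlhs : Tendsto (fun t => η (ψ t)
        + ∑ i, (ContinuousLinearMap.adjoint (A i)) (u i (ψ t))) atTop
        (𝓝 (a.1 + ∑ i, (ContinuousLinearMap.adjoint (A i)) (a.2 i))) :=
      hη0.add (tendsto_finset_sum _ (fun i _ =>
        ((ContinuousLinearMap.adjoint (A i)).continuous.tendsto _).comp (hχ i)))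
    have hrhs : Tendsto (fun t => ξ (ψ t) - gradient f (x (ψ t))) atTop
        (𝓝 (0 - gradient f xstar)) :=
      (hξ0.comp hψ.tendsto_atTop).sub (hgrad.comp hψ.tendsto_atTop)
    have he : a.1 + ∑ i, (ContinuousLinearMap.adjoint (A i)) (a.2 i)
        = 0 - gradient f xstar := by
      apply tendsto_nhds_unique hlhs
      exact hrhs.congr (fun t => (heq' (ψ t)).symm)
    rw [add_assoc, he]
    abel
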